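/- Fix integers n ≥ 2 and d ≥ 2, and s ∈ (ℂ*)ⁿ. Let H_{n,d}(s) be the n×n matrix with (j,k) entry s^{𝟙 − e_j + d e_k} = (∏_ℓ s_ℓ) · s_j^{−1} · s_k^{d}. If A is an n×n matrix such that x ↦ x + (Ax)^d has Jacobian identically 1, then x ↦ x + ((A ⊙ H_{n,d}(s))x)^d also has Jacobian identically 1, where ⊙ is the Hadamard (entrywise) product. -/

import Mathlib

open Matrix BigOperators

/-- Jacobian determinant of a map `f : ℂ^ι → ℂ^ι` at `x`. -/
noncomputable def jacDet {ι : Type*} [Fintype ι] [DecidableEq ι]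
    (f : (ι → ℂ) → (ι → ℂ)) (x : ι → ℂ) : ℂ :=
  (LinearMap.toMatrix (Pi.basisFun ℂ ι) (Pi.basisFun ℂ ι)
    (fderiv ℂ f x).toLinearMap).det

/-- The map `x ↦ x + φ(Ax)`, with `φ` applied entrywise. -/
noncomputable def phiMap {ι : Type*} [Fintype ι] (A : Matrix ι ι ℂ) (φ : ℂ → ℂ)
    (x : ι → ℂ) : ι → ℂ :=
  fun j => x j + φ (A.mulVec x j)

/-- Domain of definition of `x ↦ x + φ(Ax)` for `φ` defined on `Ω`. -/
def phiDom {ι : Type*} [Fintype ι] (A : Matrix ι ι ℂ) (Ω : Set ℂ) : Set (ι → ℂ) :=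
  {x | ∀ j, A.mulVec x j ∈ Ω}

/-- `(A, φ)` is a good pair: the Jacobian of `x + φ(Ax)` is identically a nonzero constant. -/
def IsGoodPair {ι : Type*} [Fintype ι] [DecidableEq ι]
    (A : Matrix ι ι ℂ) (Ω : Set ℂ) (φ : ℂ → ℂ) : Prop :=
  ∃ c : ℂ, c ≠ 0 ∧ ∀ x ∈ phiDom A Ω, jacDet (phiMap A φ) x = c

/-- A matrix is universal if it forms a good pair with every analytic function. -/
def IsUniversal {ι : Type*} [Fintype ι] [DecidableEq ι] (A : Matrix ι ι ℂ) : Prop :=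
  ∀ (Ω : Set ℂ) (φ : ℂ → ℂ), IsOpen Ω → Ω.Nonempty → IsPreconnected Ω →
    AnalyticOn ℂ φ Ω → (phiDom A Ω).Nonempty → IsGoodPair A Ω φ

/-- The principal minor of `A` indexed by `I`. -/
noncomputable def principalMinor {ι : Type*} [DecidableEq ι] (A : Matrix ι ι ℂ)
    (I : Finset ι) : ℂ :=
  (A.submatrix (fun i : I => (i : ι)) (fun i : I => (i : ι))).det

lemma jacDet_pow_map {n : ℕ} (d : ℕ) (M : Matrix (Fin n) (Fin n) ℂ) (x : Fin n → ℂ) :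
    jacDet (fun y j => y j + (M.mulVec y j) ^ d) x
      = Matrix.det (1 + Matrix.of fun j k => (d : ℂ) * (M.mulVec x j) ^ (d - 1) * M j k) := by
  have hT : ∀ j : Fin n, HasFDerivAt (fun y : Fin n → ℂ => M.mulVec y j)
      ((ContinuousLinearMap.proj j).comp
        (LinearMap.toContinuousLinearMap (Matrix.mulVecLin M))) x :=
    fun j => ((ContinuousLinearMap.proj j).comp
        (LinearMap.toContinuousLinearMap (Matrix.mulVecLin M))).hasFDerivAt
  set L : (Fin n → ℂ) →L[ℂ] (Fin n → ℂ) :=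
    ContinuousLinearMap.pi (fun j =>
      ContinuousLinearMap.proj j +
        ((d : ℂ) * (M.mulVec x j) ^ (d - 1)) •
          ((ContinuousLinearMap.proj j).comp
            (LinearMap.toContinuousLinearMap (Matrix.mulVecLin M)))) with hL
  have hF : HasFDerivAt (fun y : Fin n → ℂ => fun j => y j + (M.mulVec y j) ^ d) L x := by
    apply hasFDerivAt_pi''
    intro j
    rw [hL, ContinuousLinearMap.proj_pi]
    exact (hasFDerivAt_apply j x).add
      ((hasDerivAt_pow d (M.mulVec x j)).comp_hasFDerivAt x (hT j))
  rw [jacDet, hF.fderiv]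
  congr 1
  ext j k
  rw [LinearMap.toMatrix_apply]
  simp only [Pi.basisFun_apply, Pi.basisFun_repr, ContinuousLinearMap.coe_coe, hL,
    ContinuousLinearMap.pi_apply, ContinuousLinearMap.add_apply, ContinuousLinearMap.coe_smul',
    Pi.smul_apply, ContinuousLinearMap.proj_apply, ContinuousLinearMap.coe_comp',
    Function.comp_apply, LinearMap.coe_toContinuousLinearMap', Matrix.mulVecLin_apply,
    Matrix.mulVec_single, smul_eq_mul, Matrix.add_apply, Matrix.one_apply, Matrix.of_apply,
    Pi.single_apply, MulOpposite.op_one, one_smul, Matrix.col_apply]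

theorem stmt15 (n : ℕ) (hn : 2 ≤ n) (d : ℕ) (hd : 2 ≤ d) (s : Fin n → ℂ)
    (hs : ∀ j, s j ≠ 0) (A : Matrix (Fin n) (Fin n) ℂ)
    (hjac : ∀ x : Fin n → ℂ, jacDet (fun y j => y j + (A.mulVec y j) ^ d) x = 1) :
    ∀ x : Fin n → ℂ,
      jacDet (fun y j => y j +
        ((Matrix.of fun j k : Fin n =>
          A j k * ((∏ ℓ, s ℓ) * (s j)⁻¹ * s k ^ d)).mulVec y j) ^ d) x = 1 := by
  intro x
  obtain ⟨e, rfl⟩ : ∃ e, d = e + 1 := ⟨d - 1, by omega⟩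
  set c : ℂ := ∏ ℓ, s ℓ with hc
  have hc0 : c ≠ 0 := Finset.prod_ne_zero_iff.mpr fun j _ => hs j
  have he : 0 < e := by omega
  obtain ⟨lam, hlam⟩ := Complex.isAlgClosed.exists_pow_nat_eq (c ^ (e + 1)) he
  set B : Matrix (Fin n) (Fin n) ℂ :=
    Matrix.of fun j k => A j k * (c * (s j)⁻¹ * s k ^ (e + 1)) with hB
  set ξ : Fin n → ℂ := fun k => lam * (s k ^ (e + 1) * x k) with hξ
  have key : Matrix.det
      (1 + Matrix.of fun j k => ((e : ℂ) + 1) * (A.mulVec ξ j) ^ e * A j k) = 1 := by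
    have := hjac ξ
    rw [jacDet_pow_map] at this
    simpa using this
  have hBx : ∀ j, B.mulVec x j = c * (s j)⁻¹ * A.mulVec (fun k => s k ^ (e + 1) * x k) j := by
    intro j
    simp only [Matrix.mulVec, dotProduct, hB, Matrix.of_apply, Finset.mul_sum]
    exact Finset.sum_congr rfl fun k _ => by ring
  have hAξ : ∀ j, A.mulVec ξ j = lam * A.mulVec (fun k => s k ^ (e + 1) * x k) j := by
    intro j
    simp only [Matrix.mulVec, dotProduct, hξ, Finset.mul_sum]
    exact Finset.sum_congr rfl fun k _ => by ring
  rw [jacDet_pow_map]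
  have hdiag : (1 + Matrix.of fun j k => ((e + 1 : ℕ) : ℂ) * (B.mulVec x j) ^ (e + 1 - 1) * B j k)
      = (Matrix.diagonal fun j => (s j ^ (e + 1))⁻¹) *
        ((1 + Matrix.of fun j k => ((e : ℂ) + 1) * (A.mulVec ξ j) ^ e * A j k) *
          (Matrix.diagonal fun j => s j ^ (e + 1))) := by
    ext j k
    rw [Matrix.diagonal_mul, Matrix.mul_diagonal]
    simp only [Matrix.add_apply, Matrix.one_apply, Matrix.of_apply, hBx j]
    simp only [Matrix.add_apply, Matrix.one_apply, Matrix.of_apply, hB, hBx j, hAξ j,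
      Nat.add_sub_cancel, Nat.cast_add, Nat.cast_one]
    set w := A.mulVec (fun k => s k ^ (e + 1) * x k) j with hw
    have h2 : (lam * w) ^ e = c ^ (e + 1) * w ^ e := by rw [mul_pow, hlam]
    rcases eq_or_ne j k with rfl | hjk
    · simp only [↓reduceIte]
      rw [h2]
      simp only [mul_pow, inv_pow]
      field_simp
      have hT : s j * s j ^ e * (s j)⁻¹ * (s j)⁻¹ ^ e = 1 := by
        rw [inv_pow]
        field_simp
        exact div_self (mul_ne_zero (hs j) (pow_ne_zero _ (hs j)))
      linear_combination -hT
    · simp only [if_neg hjk]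
      rw [h2]
      simp only [mul_pow, inv_pow]
      field_simp
      ring
  rw [hdiag, Matrix.det_mul, Matrix.det_mul, key, one_mul, Matrix.det_diagonal,
    Matrix.det_diagonal, Finset.prod_inv_distrib]
  exact inv_mul_cancel₀ (Finset.prod_ne_zero_iff.mpr fun i _ => pow_ne_zero _ (hs i))
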